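/- arXiv:2410.09548 — 3 statements merged into one kernel-verified Lean document; each statement's English description precedes it below -/
import Mathlib

section
/- Let θ₁, θ₂, θ₃ be independent random variables, each uniformly distributed on [0, 2π), and let v₁, v₂, v₃ be strictly positive real-valued random variables (with arbitrary joint distribution) that are independent of (θ₁, θ₂, θ₃). Let S = Σ_{i=1}^{3} vᵢ·(cos θᵢ, sin θᵢ) ∈ ℝ², identified with the complex number Σ_{i=1}^{3} vᵢ e^{iθᵢ}. Then S ≠ 0 almost surely, and the argument of S is uniformly distributed: the pushforward of the underlying probability measure under ω ↦ arg(S(ω)) is the uniform probability measure on the interval (−π, π]. -/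
open MeasureTheory ProbabilityTheory Real Set

noncomputable section

namespace UAVAux

instance factPos : Fact (0 < 2 * π) := ⟨by positivity⟩

instance : MeasureSpace Real.Angle := inferInstanceAs (MeasureSpace (AddCircle (2 * π)))
instance : BorelSpace Real.Angle := inferInstanceAs (BorelSpace (AddCircle (2 * π)))
instance : MeasureTheory.Measure.IsAddHaarMeasure (volume : Measure Real.Angle) :=
  inferInstanceAs (MeasureTheory.Measure.IsAddHaarMeasure (volume : Measure (AddCircle (2 * π))))
instance : IsFiniteMeasure (volume : Measure Real.Angle) :=
  inferInstanceAs (IsFiniteMeasure (volume : Measure (AddCircle (2 * π))))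
instance : CompactSpace Real.Angle := inferInstanceAs (CompactSpace (AddCircle (2 * π)))
instance : SecondCountableTopology Real.Angle :=
  inferInstanceAs (SecondCountableTopology (AddCircle (2 * π)))

example : Measurable (fun p : Real.Angle × Real.Angle => p.1 + p.2) := measurable_add

instance : NullSingletonClass (volume : Measure Real.Angle) := by
  constructor
  intro x
  have h := AddCircle.volume_closedBall (2 * π) (x := (x : AddCircle (2 * π))) 0
  replace h : volume ({x} : Set Real.Angle) = ENNReal.ofReal (min (2 * π) (2 * 0)) := 
    (congrArg (fun s : Set (AddCircle (2 * π)) => volume s) (show Metric.closedBall (x : AddCircle (2 * π)) 0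
      = {(x : AddCircle (2 * π))} from Set.ext fun _ => dist_le_zero).symm).trans h
  have h2 : (2 * π) ⊓ (2 * 0) = 0 := by rw [mul_zero]; exact min_eq_right (by positivity)
  exact h.trans (by rw [h2, ENNReal.ofReal_zero])


/-- The point on the unit circle with angle `θ`. -/
def e (θ : Real.Angle) : ℂ := (θ.cos : ℂ) + (θ.sin : ℂ) * Complex.I

lemma e_coe (x : ℝ) : e x = Complex.exp (Complex.I * x) := by
  rw [mul_comm, Complex.exp_mul_I, e, Real.Angle.cos_coe, Real.Angle.sin_coe,
    Complex.ofReal_cos, Complex.ofReal_sin]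

lemma e_add (a b : Real.Angle) : e (a + b) = e a * e b := by
  simp only [e, Real.Angle.cos_add, Real.Angle.sin_add]
  push_cast
  ring_nf
  rw [Complex.I_sq]
  ring

lemma e_ne_zero (a : Real.Angle) : e a ≠ 0 := by
  intro h
  have h1 : a.cos = 0 := by
    have := congrArg Complex.re h
    simpa [e] using this
  have h2 : a.sin = 0 := by
    have := congrArg Complex.im h
    simpa [e] using this
  have := Real.Angle.cos_sq_add_sin_sq a
  rw [h1, h2] at this
  norm_num at this

lemma arg_e (a : Real.Angle) : (Complex.arg (e a) : Real.Angle) = a :=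
  Complex.arg_cos_add_sin_mul_I_coe_angle a

lemma e_injective : Function.Injective e := by
  intro a b h
  rw [← arg_e a, ← arg_e b, h]

lemma continuous_e : Continuous e :=
  (Complex.continuous_ofReal.comp Real.Angle.continuous_cos).add
    ((Complex.continuous_ofReal.comp Real.Angle.continuous_sin).mul continuous_const)

lemma measurable_e : Measurable e := continuous_e.measurable

lemma measurable_toReal : Measurable Real.Angle.toReal := by
  have h := (AddCircle.measurableEquivIoc (2 * π) (-π)).measurable
  exact (measurable_subtype_coe.comp h : _)


def c2 : ENNReal := (ENNReal.ofReal (2 * π))⁻¹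

lemma c2_mul : c2 * ENNReal.ofReal (2 * π) = 1 :=
  ENNReal.inv_mul_cancel (by simp [Real.pi_pos]) ENNReal.ofReal_ne_top

/-- normalized Haar measure on the circle of angles -/
def ham : Measure Real.Angle := c2 • volume

instance : IsProbabilityMeasure ham := by
  constructor
  rw [ham, Measure.smul_apply, smul_eq_mul,
    show (volume (univ : Set Real.Angle)) = ENNReal.ofReal (2 * π) from AddCircle.measure_univ (2 * π)]
  exact c2_mul

instance : NullSingletonClass ham := by
  constructor; intro x; rw [ham, Measure.smul_apply, measure_singleton, smul_eq_mul, mul_zero]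

instance : ham.IsAddLeftInvariant := by
  rw [ham]; infer_instance

instance : ham.IsAddRightInvariant := by
  rw [ham]; infer_instance

def unif : Measure ℝ := c2 • volume.restrict (Ico 0 (2 * π))

instance : IsProbabilityMeasure unif := by
  constructor
  rw [unif, Measure.smul_apply, smul_eq_mul, Measure.restrict_apply_univ, Real.volume_Ico,
    sub_zero]
  exact c2_mul

def uniIoc : Measure ℝ := c2 • volume.restrict (Ioc (-π) π)

instance : IsProbabilityMeasure uniIoc := by
  constructor
  rw [uniIoc, Measure.smul_apply, smul_eq_mul, Measure.restrict_apply_univ, Real.volume_Ioc,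
    show π - (-π) = 2 * π by ring]
  exact c2_mul

lemma map_coe_unif : Measure.map (fun x : ℝ => (x : Real.Angle)) unif = ham := by
  have h1 : unif = c2 • volume.restrict (Ioc 0 (2 * π)) := by
    rw [unif, Measure.restrict_congr_set Ico_ae_eq_Ioc]
  have h2 : MeasureTheory.Measure.map (fun x : ℝ => (x : Real.Angle))
      (volume.restrict (Ioc 0 (2 * π))) = (volume : Measure Real.Angle) := by
    have := (AddCircle.measurePreserving_mk (2 * π) 0).map_eq
    rw [zero_add] at this
    exact this
  rw [h1, Measure.map_smul, h2, ham]

lemma measurable_angle_coe : Measurable (fun x : ℝ => (x : Real.Angle)) :=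
  Real.Angle.continuous_coe.measurable

lemma map_toReal_ham : Measure.map Real.Angle.toReal ham = uniIoc := by
  have h2 : MeasureTheory.Measure.map (fun x : ℝ => (x : Real.Angle))
      (volume.restrict (Ioc (-π) π)) = (volume : Measure Real.Angle) := by
    have := (AddCircle.measurePreserving_mk (2 * π) (-π)).map_eq
    rw [show -π + 2 * π = π by ring] at this
    exact this
  rw [ham, Measure.map_smul, ← h2, Measure.map_map measurable_toReal measurable_angle_coe,
    uniIoc]
  congr 1
  have : (Real.Angle.toReal ∘ fun x : ℝ => (x : Real.Angle)) =ᵐ[volume.restrict (Ioc (-π) π)] id := by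
    refine (ae_restrict_iff' measurableSet_Ioc).2 (Filter.Eventually.of_forall fun x hx => ?_)
    exact Real.Angle.toReal_coe_eq_self_iff_mem_Ioc.2 hx
  rw [Measure.map_congr this, Measure.map_id]


lemma eq_ham_of_invariant (lam : Measure Real.Angle) [IsProbabilityMeasure lam]
    (h : ∀ t : Real.Angle, Measure.map (t + ·) lam = lam) : lam = ham := by
  ext s hs
  have ind_meas : Measurable (fun p : Real.Angle × Real.Angle => s.indicator (fun _ => (1:ENNReal)) (p.1 + p.2)) :=
    (measurable_one.indicator hs).comp measurable_add
  have step1 : ∀ t : Real.Angle, lam s = ∫⁻ a, s.indicator (fun _ => (1:ENNReal)) (t + a) ∂lam := by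
    intro t
    conv_lhs => rw [← h t]
    rw [Measure.map_apply (measurable_const_add t) hs, ← setLIntegral_one,
      ← lintegral_indicator ((measurable_const_add t) hs)]
    refine lintegral_congr fun a => ?_
    by_cases ha : t + a ∈ s <;> simp [Set.indicator, ha]
  calc lam s = ∫⁻ t, lam s ∂ham := by
        rw [lintegral_const, measure_univ, mul_one]
    _ = ∫⁻ t, ∫⁻ a, s.indicator (fun _ => (1:ENNReal)) (t + a) ∂lam ∂ham := by
        exact lintegral_congr fun t => step1 t
    _ = ∫⁻ a, ∫⁻ t, s.indicator (fun _ => (1:ENNReal)) (t + a) ∂ham ∂lam :=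
        lintegral_lintegral_swap ind_meas.aemeasurable
    _ = ∫⁻ a, ham s ∂lam := by
        refine lintegral_congr fun a => ?_
        rw [show (fun t : Real.Angle => s.indicator (fun _ => (1:ENNReal)) (t + a))
            = fun t => ((fun u => u + a) ⁻¹' s).indicator (fun _ => (1:ENNReal)) t by
          funext t; by_cases ht : t + a ∈ s <;> simp [Set.indicator, ht]]
        rw [lintegral_indicator ((measurable_add_const a) hs), setLIntegral_one,
          ← Measure.map_apply (measurable_add_const a) hs, map_add_right_eq_self]
    _ = ham s := by rw [lintegral_const, measure_univ, mul_one]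


/-- The resultant as a function of the three angles. -/
def F (x : Fin 3 → ℝ) (p : Real.Angle × Real.Angle × Real.Angle) : ℂ :=
  x 0 * e p.1 + x 1 * e p.2.1 + x 2 * e p.2.2

lemma measurable_F (x : Fin 3 → ℝ) : Measurable (F x) :=
  (((measurable_e.comp measurable_fst).const_mul _).add
    ((measurable_e.comp (measurable_fst.comp measurable_snd)).const_mul _)).add
    ((measurable_e.comp (measurable_snd.comp measurable_snd)).const_mul _)

/-- The product measure on the three angles. -/
def P3 : Measure (Real.Angle × Real.Angle × Real.Angle) := ham.prod (ham.prod ham)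

instance : IsProbabilityMeasure P3 := by
  rw [P3]; infer_instance

lemma nonvanish (x : Fin 3 → ℝ) (hx : x 2 ≠ 0) : P3 {p | F x p = 0} = 0 := by
  have hmeas : MeasurableSet {p | F x p = 0} := measurable_F x (measurableSet_singleton 0)
  rw [P3, Measure.measure_prod_null hmeas]
  refine Filter.Eventually.of_forall fun t => ?_
  have hmeas2 : MeasurableSet (Prod.mk t ⁻¹' {p | F x p = 0}) :=
    hmeas.preimage measurable_prodMk_left
  rw [Pi.zero_apply, Measure.measure_prod_null hmeas2]
  refine Filter.Eventually.of_forall fun b => ?_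
  have hsub : (Prod.mk b ⁻¹' (Prod.mk t ⁻¹' {p | F x p = 0})).Subsingleton := by
    intro c hc c' hc'
    simp only [Set.mem_preimage, Set.mem_setOf_eq, F] at hc hc'
    have h1 : (x 2 : ℂ) * e c = (x 2 : ℂ) * e c' := by
      have := hc.trans hc'.symm
      linear_combination this
    have h2 : e c = e c' := by
      have hx2 : (x 2 : ℂ) ≠ 0 := by exact_mod_cast hx
      exact mul_left_cancel₀ hx2 h1
    exact e_injective h2
  exact hsub.measure_zero _

lemma F_shift (x : Fin 3 → ℝ) (t : Real.Angle) (p : Real.Angle × Real.Angle × Real.Angle) :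
    F x (t + p.1, (t + p.2.1, t + p.2.2)) = e t * F x p := by
  simp only [F, e_add]; ring

lemma measurable_argA (x : Fin 3 → ℝ) :
    Measurable (fun p : Real.Angle × Real.Angle × Real.Angle =>
      ((Complex.arg (F x p) : ℝ) : Real.Angle)) :=
  measurable_angle_coe.comp (Complex.measurable_arg.comp (measurable_F x))

lemma map_argA (x : Fin 3 → ℝ) (hx : x 2 ≠ 0) :
    Measure.map (fun p => ((Complex.arg (F x p) : ℝ) : Real.Angle)) P3 = ham := by
  have hne : ∀ᵐ p ∂P3, F x p ≠ 0 := by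
    rw [ae_iff]
    convert nonvanish x hx using 2
    ext p; simp
  haveI : IsProbabilityMeasure
      (Measure.map (fun p => ((Complex.arg (F x p) : ℝ) : Real.Angle)) P3) :=
    Measure.isProbabilityMeasure_map (measurable_argA x).aemeasurable
  apply eq_ham_of_invariant
  intro t
  have hσ : MeasurePreserving
      (Prod.map (fun a : Real.Angle => t + a)
        (Prod.map (fun a : Real.Angle => t + a) (fun a : Real.Angle => t + a))) P3 P3 :=
    (measurePreserving_add_left ham t).prod
      ((measurePreserving_add_left ham t).prod (measurePreserving_add_left ham t))
  calc Measure.map (fun a => t + a) (Measure.map (fun p => ((Complex.arg (F x p) : ℝ) : Real.Angle)) P3)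
      = Measure.map ((fun a => t + a) ∘ (fun p => ((Complex.arg (F x p) : ℝ) : Real.Angle))) P3 :=
        Measure.map_map (measurable_const_add t) (measurable_argA x)
    _ = Measure.map ((fun p => ((Complex.arg (F x p) : ℝ) : Real.Angle)) ∘
        (Prod.map (fun a : Real.Angle => t + a)
          (Prod.map (fun a : Real.Angle => t + a) (fun a : Real.Angle => t + a)))) P3 := by
        refine Measure.map_congr ?_
        filter_upwards [hne] with p hp
        show t + ((Complex.arg (F x p) : ℝ) : Real.Angle)
            = ((Complex.arg (F x (Prod.map _ (Prod.map _ _) p)) : ℝ) : Real.Angle)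
        have hshift : F x (Prod.map (fun a : Real.Angle => t + a)
            (Prod.map (fun a : Real.Angle => t + a) (fun a : Real.Angle => t + a)) p)
            = e t * F x p := F_shift x t p
        rw [hshift, Complex.arg_mul_coe_angle (e_ne_zero t) hp, arg_e]
    _ = Measure.map (fun p => ((Complex.arg (F x p) : ℝ) : Real.Angle))
          (Measure.map (Prod.map (fun a : Real.Angle => t + a)
            (Prod.map (fun a : Real.Angle => t + a) (fun a : Real.Angle => t + a))) P3) :=
        (Measure.map_map (measurable_argA x) hσ.measurable).symm
    _ = Measure.map (fun p => ((Complex.arg (F x p) : ℝ) : Real.Angle)) P3 := by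
        rw [hσ.map_eq]

lemma map_arg (x : Fin 3 → ℝ) (hx : x 2 ≠ 0) :
    Measure.map (fun p => Complex.arg (F x p)) P3 = uniIoc := by
  have hfun : (fun p : Real.Angle × Real.Angle × Real.Angle => Complex.arg (F x p))
      = Real.Angle.toReal ∘ (fun p => ((Complex.arg (F x p) : ℝ) : Real.Angle)) :=
    funext fun p => (Complex.arg_coe_angle_toReal_eq_arg _).symm
  rw [hfun, ← Measure.map_map measurable_toReal (measurable_argA x), map_argA x hx,
    map_toReal_ham]


/-- coordinatewise reduction mod 2π -/
def cA (y : Fin 3 → ℝ) (i : Fin 3) : Real.Angle := (y i : Real.Angle)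

lemma measurable_cA : Measurable cA :=
  measurable_pi_lambda _ fun i => measurable_angle_coe.comp (measurable_pi_apply i)

def m3 : Measure (Fin 3 → ℝ) := Measure.pi fun _ => unif

instance : IsProbabilityMeasure m3 := by rw [m3]; infer_instance

lemma map_cA_m3 : Measure.map cA m3 = Measure.pi fun _ : Fin 3 => ham := by
  refine (Measure.pi_eq fun s hs => ?_).symm
  rw [Measure.map_apply measurable_cA (MeasurableSet.univ_pi hs)]
  have hpre : cA ⁻¹' Set.univ.pi s = Set.univ.pi fun i => (fun x : ℝ => (x : Real.Angle)) ⁻¹' s i := by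
    ext y; simp [cA, Set.mem_univ_pi]
  rw [hpre, m3, Measure.pi_pi]
  refine Finset.prod_congr rfl fun i _ => ?_
  rw [← Measure.map_apply measurable_angle_coe (hs i), map_coe_unif]

def rA (a : Fin 3 → Real.Angle) : Real.Angle × Real.Angle × Real.Angle := (a 0, (a 1, a 2))

lemma measurable_rA : Measurable rA :=
  (measurable_pi_apply 0).prodMk ((measurable_pi_apply 1).prodMk (measurable_pi_apply 2))

lemma map_rA : Measure.map rA (Measure.pi fun _ : Fin 3 => ham) = P3 := by
  have h1 := measurePreserving_piFinSuccAbove (fun _ : Fin 3 => ham) 0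
  have h2 := (MeasurePreserving.id ham).prod
    (measurePreserving_piFinTwo (fun _ : Fin 2 => ham))
  have hcomp := h2.comp h1
  have hfun : (Prod.map id ⇑(MeasurableEquiv.piFinTwo fun _ : Fin 2 => Real.Angle)) ∘
      ⇑(MeasurableEquiv.piFinSuccAbove (fun _ : Fin 3 => Real.Angle) 0) = rA := by
    funext a
    show (a 0, ((fun _ : Fin 3 => a) 0 ((0 : Fin 3).succAbove 0),
      (fun _ => a) 0 ((0 : Fin 3).succAbove 1))) = _
    rfl
  rw [← hfun]
  exact (hcomp.map_eq : _)

def qR : (Fin 3 → ℝ) → Real.Angle × Real.Angle × Real.Angle := rA ∘ cA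

lemma measurable_qR : Measurable qR := measurable_rA.comp measurable_cA

lemma map_qR : Measure.map qR m3 = P3 := by
  rw [qR, ← Measure.map_map measurable_rA measurable_cA, map_cA_m3, map_rA]


lemma measurable_Func : Measurable (fun p : (Fin 3 → ℝ) × (Real.Angle × Real.Angle × Real.Angle) =>
    F p.1 p.2) := by
  apply Measurable.add
  apply Measurable.add
  · exact (Complex.measurable_ofReal.comp ((measurable_pi_apply 0).comp measurable_fst)).mul
      (measurable_e.comp (measurable_fst.comp measurable_snd))
  · exact (Complex.measurable_ofReal.comp ((measurable_pi_apply 1).comp measurable_fst)).mul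
      (measurable_e.comp ((measurable_fst.comp measurable_snd).comp measurable_snd))
  · exact (Complex.measurable_ofReal.comp ((measurable_pi_apply 2).comp measurable_fst)).mul
      (measurable_e.comp ((measurable_snd.comp measurable_snd).comp measurable_snd))

end UAVAux

open UAVAux

/-- The argument of the resultant of three independent uniformly directed
velocity vectors is uniformly distributed on `(-π, π]`, and the resultant is a.s. nonzero. -/
theorem arg_of_resultant_uniform
    {Ω : Type*} [MeasurableSpace Ω] (μ : Measure Ω) [IsProbabilityMeasure μ]
    (v θ : Fin 3 → Ω → ℝ)
    (hvmeas : ∀ i, Measurable (v i)) (hθmeas : ∀ i, Measurable (θ i))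
    (hvpos : ∀ i, ∀ᵐ ω ∂μ, 0 < v i ω)
    (hθindep : iIndepFun θ μ)
    (hθunif : ∀ i, Measure.map (θ i) μ
      = (ENNReal.ofReal (2 * π))⁻¹ • volume.restrict (Set.Ico 0 (2 * π)))
    (hindep : IndepFun (fun ω i => v i ω) (fun ω i => θ i ω) μ)
    (S : Ω → ℂ)
    (hS : ∀ ω, S ω = ∑ i, (v i ω : ℂ) * Complex.exp (Complex.I * (θ i ω : ℂ))) :
    (∀ᵐ ω ∂μ, S ω ≠ 0) ∧
      Measure.map (fun ω => Complex.arg (S ω)) μ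
        = (ENNReal.ofReal (2 * π))⁻¹ • volume.restrict (Set.Ioc (-π) π) := by
  classical
  set X : Ω → (Fin 3 → ℝ) := fun ω i => v i ω with hXdef
  set Y : Ω → (Fin 3 → ℝ) := fun ω i => θ i ω with hYdef
  have hX : Measurable X := measurable_pi_lambda _ hvmeas
  have hY : Measurable Y := measurable_pi_lambda _ hθmeas
  have hunif : ∀ i, Measure.map (θ i) μ = unif := fun i => (hθunif i).trans rfl
  have hYlaw : Measure.map Y μ = m3 := by
    rw [m3]
    refine (Measure.pi_eq fun s hs => ?_).symm
    rw [Measure.map_apply hY (MeasurableSet.univ_pi hs)]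
    have hpre : Y ⁻¹' Set.univ.pi s = ⋂ i ∈ Finset.univ, θ i ⁻¹' s i := by
      ext ω; simp [hYdef, Set.mem_univ_pi]
    rw [hpre, hθindep.measure_inter_preimage_eq_mul Finset.univ (fun i _ => hs i)]
    refine Finset.prod_congr rfl fun i _ => ?_
    rw [← Measure.map_apply (hθmeas i) (hs i), hunif i]
  set κ := Measure.map X μ with hκdef
  haveI : IsProbabilityMeasure κ := Measure.isProbabilityMeasure_map hX.aemeasurable
  have hpair : Measure.map (fun ω => (X ω, Y ω)) μ = κ.prod m3 := by
    rw [hκdef, ← hYlaw]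
    exact (indepFun_iff_map_prod_eq_prod_map_map hX.aemeasurable hY.aemeasurable).mp hindep
  have hpair2 : Measure.map (fun ω => (X ω, qR (Y ω))) μ = κ.prod P3 := by
    have hcomp : (fun ω => (X ω, qR (Y ω))) = (Prod.map id qR) ∘ (fun ω => (X ω, Y ω)) := rfl
    rw [hcomp, ← Measure.map_map (measurable_id.prodMap measurable_qR) (hX.prodMk hY), hpair,
      ← Measure.map_prod_map _ _ measurable_id measurable_qR, Measure.map_id, map_qR]
  have hSrep : ∀ ω, S ω = F (X ω) (qR (Y ω)) := by
    intro ω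
    rw [hS ω, Fin.sum_univ_three]
    simp only [F, qR, Function.comp, rA, cA, e_coe]
    rfl
  have hx2 : ∀ᵐ x ∂κ, x 2 ≠ 0 := by
    have hms : MeasurableSet {x : Fin 3 → ℝ | x 2 ≠ 0} :=
      ((measurable_pi_apply 2) (measurableSet_singleton 0)).compl
    rw [hκdef, ae_map_iff hX.aemeasurable hms]
    filter_upwards [hvpos 2] with ω h using ne_of_gt h
  have hZmeas : Measurable fun ω => (X ω, qR (Y ω)) := hX.prodMk (measurable_qR.comp hY)
  have hFset : MeasurableSet {p : (Fin 3 → ℝ) × (Real.Angle × Real.Angle × Real.Angle) |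
      F p.1 p.2 = 0} := measurable_Func (measurableSet_singleton 0)
  have hzero : μ {ω | S ω = 0} = 0 := by
    have hpre : {ω | S ω = 0} = (fun ω => (X ω, qR (Y ω))) ⁻¹' {p | F p.1 p.2 = 0} := by
      ext ω; simp [hSrep ω]
    rw [hpre, ← Measure.map_apply hZmeas hFset, hpair2, Measure.measure_prod_null hFset]
    filter_upwards [hx2] with x hx
    exact nonvanish x hx
  constructor
  · rw [ae_iff]
    convert hzero using 2
    ext ω; simp
  · have hargmeas : Measurable fun p : (Fin 3 → ℝ) × (Real.Angle × Real.Angle × Real.Angle) =>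
        Complex.arg (F p.1 p.2) := Complex.measurable_arg.comp measurable_Func
    have hfun : (fun ω => Complex.arg (S ω))
        = (fun p : (Fin 3 → ℝ) × (Real.Angle × Real.Angle × Real.Angle) =>
            Complex.arg (F p.1 p.2)) ∘ (fun ω => (X ω, qR (Y ω))) :=
      funext fun ω => by rw [hSrep ω]; rfl
    have hres : Measure.map (fun ω => Complex.arg (S ω)) μ = uniIoc := by
      rw [hfun, ← Measure.map_map hargmeas hZmeas, hpair2]
      ext s hs
      rw [Measure.map_apply hargmeas hs, Measure.prod_apply (hargmeas hs)]
      have hae : ∀ᵐ x ∂κ, P3 (Prod.mk x ⁻¹' ((fun p : (Fin 3 → ℝ) ×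
          (Real.Angle × Real.Angle × Real.Angle) => Complex.arg (F p.1 p.2)) ⁻¹' s))
          = uniIoc s := by
        filter_upwards [hx2] with x hx
        have hsec : Prod.mk x ⁻¹' ((fun p : (Fin 3 → ℝ) ×
            (Real.Angle × Real.Angle × Real.Angle) => Complex.arg (F p.1 p.2)) ⁻¹' s)
            = (fun p => Complex.arg (F x p)) ⁻¹' s := rfl
        rw [hsec, ← Measure.map_apply (measurable_F x).carg hs,
          map_arg x hx]
      rw [lintegral_congr_ae hae, lintegral_const, measure_univ, mul_one]
    exact hres.trans rfl
end
end

section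
/- Let x₁, x₂ be points in the Euclidean plane ℝ² at distance s = ‖x₁ − x₂‖ > 0, let r > 0 and θ ∈ [0, π], and set R = √(r² + s² + 2rs·cos θ). Assume that either θ ≤ π/2, or s·cos(π − θ) ≤ r (so that the angle arcsin(s·sin θ/R) subtended at the far intersection configuration does not exceed π/2). Then the area (two-dimensional Lebesgue measure) of the intersection of the closed disk of radius r centered at x₁ with the closed disk of radius R centered at x₂ equals R²·(θ − arcsin(s·sin θ / R)) + r²·(π − θ) − r·s·sin θ. -/
set_option maxHeartbeats 1000000

open MeasureTheory Real

open intervalIntegral Set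
lemma slice_vol (m : ℝ) : volume {c : ℝ | c ^ 2 ≤ m} = ENNReal.ofReal (2 * Real.sqrt m) := by
  rcases le_or_gt 0 m with hm | hm
  · have : {c : ℝ | c ^ 2 ≤ m} = Set.Icc (-Real.sqrt m) (Real.sqrt m) := by
      ext c
      simp only [Set.mem_setOf_eq, Set.mem_Icc, ← abs_le]
      rw [← Real.sqrt_sq_eq_abs]
      exact (Real.sqrt_le_sqrt_iff hm).symm
    rw [this, Real.volume_Icc]
    ring_nf
  · have h1 : {c : ℝ | c ^ 2 ≤ m} = ∅ := by
      ext c; simp only [Set.mem_setOf_eq, Set.mem_empty_iff_false, iff_false, not_le]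
      exact lt_of_lt_of_le hm (sq_nonneg c)
    rw [h1, Real.sqrt_eq_zero_of_nonpos hm.le]
    simp

noncomputable def segF (ρ u : ℝ) : ℝ := u * Real.sqrt (ρ ^ 2 - u ^ 2) + ρ ^ 2 * Real.arcsin (u / ρ)

lemma segF_cont (ρ : ℝ) : Continuous (segF ρ) := by
  unfold segF
  continuity

lemma segF_hasDeriv {ρ u : ℝ} (hρ : 0 < ρ) (hu : u ∈ Set.Ioo (-ρ) ρ) :
    HasDerivAt (segF ρ) (2 * Real.sqrt (ρ ^ 2 - u ^ 2)) u := by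
  obtain ⟨hu1, hu2⟩ := hu
  have hpos : 0 < ρ ^ 2 - u ^ 2 := by nlinarith
  set w := Real.sqrt (ρ ^ 2 - u ^ 2) with hw
  have hwpos : 0 < w := Real.sqrt_pos.mpr hpos
  have hwsq : w ^ 2 = ρ ^ 2 - u ^ 2 := Real.sq_sqrt hpos.le
  have h1 : HasDerivAt (fun u : ℝ => ρ ^ 2 - u ^ 2) (-(2 * u)) u := by
    simpa using ((hasDerivAt_pow 2 u).const_sub (ρ ^ 2))
  have hsq : HasDerivAt (fun u : ℝ => Real.sqrt (ρ ^ 2 - u ^ 2))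
      (-(2 * u) / (2 * w)) u := by
    have := (Real.hasDerivAt_sqrt hpos.ne').comp u h1
    exact this.congr_deriv (by rw [← hw]; ring)
  have hdiv : HasDerivAt (fun u : ℝ => u / ρ) (1 / ρ) u := by
    simpa using (hasDerivAt_id u).div_const ρ
  have hne1 : u / ρ ≠ -1 := by
    intro h; rw [div_eq_iff hρ.ne'] at h; nlinarith
  have hne2 : u / ρ ≠ 1 := by
    intro h; rw [div_eq_iff hρ.ne'] at h; nlinarith
  have harc : HasDerivAt (fun u : ℝ => Real.arcsin (u / ρ))
      (1 / Real.sqrt (1 - (u / ρ) ^ 2) * (1 / ρ)) u :=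
    by have := (Real.hasDerivAt_arcsin hne1 hne2).comp u hdiv; exact this
  have hsqrt1 : Real.sqrt (1 - (u / ρ) ^ 2) = w / ρ := by
    rw [show (1 : ℝ) - (u / ρ) ^ 2 = (ρ ^ 2 - u ^ 2) / ρ ^ 2 by field_simp,
      Real.sqrt_div hpos.le, Real.sqrt_sq hρ.le]
  have hmain := ((hasDerivAt_id u).mul hsq).add (harc.const_mul (ρ ^ 2))
  have hval : 1 * Real.sqrt (ρ ^ 2 - u ^ 2) + id u * (-(2 * u) / (2 * w))
      + ρ ^ 2 * (1 / Real.sqrt (1 - (u / ρ) ^ 2) * (1 / ρ)) = 2 * Real.sqrt (ρ ^ 2 - u ^ 2) := by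
    rw [hsqrt1]
    simp only [id_eq, ← hw]
    field_simp
    linear_combination (-1) * hwsq
  have := hval ▸ hmain
  exact this

lemma seg_integral {ρ a b : ℝ} (hρ : 0 ≤ ρ) (ha : -ρ ≤ a) (hab : a ≤ b) (hb : b ≤ ρ) :
    ∫ u in a..b, 2 * Real.sqrt (ρ ^ 2 - u ^ 2) = segF ρ b - segF ρ a := by
  rcases eq_or_lt_of_le hρ with hρ0 | hρ0
  · have hab0 : a = b := le_antisymm hab (by linarith [ha, hb, hρ0])
    rw [hab0, intervalIntegral.integral_same]; ring
  · apply intervalIntegral.integral_eq_sub_of_hasDeriv_right_of_le hab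
      ((segF_cont ρ).continuousOn)
    · intro x hx
      have hx' : x ∈ Set.Ioo (-ρ) ρ := ⟨lt_of_le_of_lt ha hx.1, lt_of_lt_of_le hx.2 hb⟩
      exact (segF_hasDeriv hρ0 hx').hasDerivWithinAt
    · apply Continuous.intervalIntegrable
      fun_prop

lemma trig_key (r s θ R : ℝ) (hr : 0 < r) (hs : 0 < s) (hθ1 : 0 ≤ θ) (hθ2 : θ ≤ π)
    (hRpos : 0 < R) (hR2 : R ^ 2 = r ^ 2 + s ^ 2 + 2 * r * s * Real.cos θ)
    (hc : 0 ≤ r + s * Real.cos θ) :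
    Real.arcsin ((s + r * Real.cos θ) / R) = π / 2 - θ + Real.arcsin (s * Real.sin θ / R) := by
  have hsin : 0 ≤ Real.sin θ := Real.sin_nonneg_of_nonneg_of_le_pi hθ1 hθ2
  have hkey : R ^ 2 - (s * Real.sin θ) ^ 2 = (r + s * Real.cos θ) ^ 2 := by
    have := Real.sin_sq_add_cos_sq θ
    nlinarith [this]
  have harg0 : 0 ≤ s * Real.sin θ / R := by positivity
  have harg1 : s * Real.sin θ / R ≤ 1 := by
    rw [div_le_one hRpos]
    nlinarith [sq_nonneg (r + s * Real.cos θ), mul_nonneg hs.le hsin, hRpos]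
  set A := Real.arcsin (s * Real.sin θ / R) with hA
  have hA0 : 0 ≤ A := Real.arcsin_nonneg.mpr harg0
  have hA2 : A ≤ π / 2 := Real.arcsin_le_pi_div_two _
  have hsinA : Real.sin A = s * Real.sin θ / R := Real.sin_arcsin (by linarith) harg1
  have hcosA : Real.cos A = (r + s * Real.cos θ) / R := by
    rw [hA, Real.cos_arcsin]
    rw [show 1 - (s * Real.sin θ / R) ^ 2 = ((r + s * Real.cos θ) / R) ^ 2 by
      field_simp; nlinarith [hkey]]
    exact Real.sqrt_sq (by positivity)
  have hAθ : A ≤ θ := by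
    rcases le_or_gt (π / 2) θ with h | h
    · linarith
    · have hcosθ : 0 ≤ Real.cos θ := Real.cos_nonneg_of_mem_Icc ⟨by linarith, h.le⟩
      have hsR : s ≤ R := by nlinarith [hRpos, mul_nonneg (mul_nonneg hr.le hs.le) hcosθ, sq_nonneg r]
      have : s * Real.sin θ / R ≤ Real.sin θ := by
        rw [div_le_iff₀ hRpos]
        nlinarith
      calc A ≤ Real.arcsin (Real.sin θ) := Real.monotone_arcsin this
        _ = θ := Real.arcsin_sin (by linarith) (by linarith)
  have hsineq : Real.sin (π / 2 - θ + A) = (s + r * Real.cos θ) / R := by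
    rw [show π / 2 - θ + A = π / 2 - (θ - A) by ring, Real.sin_pi_div_two_sub,
      Real.cos_sub, hsinA, hcosA]
    have := Real.sin_sq_add_cos_sq θ
    field_simp
    nlinarith [this]
  rw [← hsineq, Real.arcsin_sin (by linarith) (by linarith)]

lemma planar_slice (r s R : ℝ) :
    volume {p : ℝ × ℝ | p.1 ^ 2 + p.2 ^ 2 ≤ r ^ 2 ∧ (p.1 - s) ^ 2 + p.2 ^ 2 ≤ R ^ 2}
      = ∫⁻ x, ENNReal.ofReal
          (2 * Real.sqrt (min (r ^ 2 - x ^ 2) (R ^ 2 - (x - s) ^ 2))) := by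
  have hmeas : MeasurableSet {p : ℝ × ℝ | p.1 ^ 2 + p.2 ^ 2 ≤ r ^ 2 ∧ (p.1 - s) ^ 2 + p.2 ^ 2 ≤ R ^ 2} := by
    rw [Set.setOf_and]
    exact ((isClosed_le (by fun_prop) continuous_const).inter
      (isClosed_le (by fun_prop) continuous_const)).measurableSet
  rw [MeasureTheory.Measure.volume_eq_prod ℝ ℝ, MeasureTheory.Measure.prod_apply hmeas]
  congr 1
  ext x
  have : (Prod.mk x ⁻¹' {p : ℝ × ℝ | p.1 ^ 2 + p.2 ^ 2 ≤ r ^ 2 ∧ (p.1 - s) ^ 2 + p.2 ^ 2 ≤ R ^ 2})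
      = {c : ℝ | c ^ 2 ≤ min (r ^ 2 - x ^ 2) (R ^ 2 - (x - s) ^ 2)} := by
    ext c
    simp only [Set.mem_preimage, Set.mem_setOf_eq, le_min_iff]
    constructor
    · rintro ⟨h1, h2⟩; exact ⟨by linarith, by linarith⟩
    · rintro ⟨h1, h2⟩; exact ⟨by linarith, by linarith⟩
  rw [this, slice_vol]

lemma planar_eval (r s θ R : ℝ) (hr : 0 < r) (hs : 0 < s) (hθ1 : 0 ≤ θ) (hθ2 : θ ≤ π)
    (hR0 : 0 ≤ R) (hR2 : R ^ 2 = r ^ 2 + s ^ 2 + 2 * r * s * Real.cos θ)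
    (hc : 0 ≤ r + s * Real.cos θ) :
    ∫⁻ x, ENNReal.ofReal (2 * Real.sqrt (min (r ^ 2 - x ^ 2) (R ^ 2 - (x - s) ^ 2)))
      = ENNReal.ofReal (R ^ 2 * (θ - Real.arcsin (s * Real.sin θ / R))
          + r ^ 2 * (π - θ) - r * s * Real.sin θ) := by
  have hsin : 0 ≤ Real.sin θ := Real.sin_nonneg_of_nonneg_of_le_pi hθ1 hθ2
  have hpyth := Real.sin_sq_add_cos_sq θ
  set f : ℝ → ℝ := fun x => 2 * Real.sqrt (min (r ^ 2 - x ^ 2) (R ^ 2 - (x - s) ^ 2)) with hf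
  have hfc : Continuous f := by
    apply continuous_const.mul
    exact (Continuous.min (by fun_prop) (by fun_prop)).sqrt
  have hnn : ∀ x, 0 ≤ f x := fun x => by positivity
  have hsupp : ∀ x ∉ Set.Ioc (s - R) r, f x = 0 := by
    intro x hx
    rw [Set.mem_Ioc, not_and_or, not_lt, not_le] at hx
    have hm : min (r ^ 2 - x ^ 2) (R ^ 2 - (x - s) ^ 2) ≤ 0 := by
      rcases hx with hx | hx
      · refine le_trans (min_le_right _ _) ?_
        nlinarith [mul_nonneg (show (0:ℝ) ≤ s - x - R by linarith)
          (show (0:ℝ) ≤ s - x + R by linarith)]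
      · refine le_trans (min_le_left _ _) ?_
        nlinarith
    rw [hf]; simp only
    rw [Real.sqrt_eq_zero_of_nonpos hm, mul_zero]
  have hcs : HasCompactSupport f :=
    HasCompactSupport.intro isCompact_Icc
      (fun x hx => hsupp x (fun h => hx (Set.Ioc_subset_Icc_self h)))
  have hint : Integrable f := hfc.integrable_of_hasCompactSupport hcs
  rw [← MeasureTheory.ofReal_integral_eq_lintegral_ofReal hint (Filter.Eventually.of_forall hnn)]
  congr 1
  -- bounds
  have hprod : 0 ≤ (R + r - s) * (R + s - r) := by nlinarith [mul_nonneg (mul_pos hr hs).le (show (0:ℝ) ≤ 1 + Real.cos θ by linarith [Real.neg_one_le_cos θ])]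
  have hsr : s - R ≤ r := by nlinarith
  have hprod2 : 0 ≤ (R - (s + r * Real.cos θ)) * (R + (s + r * Real.cos θ)) := by
    nlinarith [sq_nonneg (r * Real.sin θ)]
  have hc2 : s + r * Real.cos θ ≤ R := by nlinarith
  have hc3 : -R ≤ s + r * Real.cos θ := by nlinarith
  have hcos1 : Real.cos θ ≤ 1 := Real.cos_le_one θ
  have hncos : -1 ≤ Real.cos θ := Real.neg_one_le_cos θ
  have hc0r : -(r * Real.cos θ) ≤ r := by nlinarith
  have hsc0 : s - R ≤ -(r * Real.cos θ) := by linarith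
  -- restrict to interval
  have h1 : ∫ x, f x = ∫ x in (s - R)..r, f x := by
    rw [intervalIntegral.integral_of_le hsr]
    exact (setIntegral_eq_integral_of_forall_compl_eq_zero hsupp).symm
  rw [h1]
  have hsplit := intervalIntegral.integral_add_adjacent_intervals (μ := volume)
    (a := s - R) (b := -(r * Real.cos θ)) (c := r)
    (hfc.intervalIntegrable _ _) (hfc.intervalIntegrable _ _)
  rw [← hsplit]
  have e1 : ∫ x in (s - R)..(-(r * Real.cos θ)), f x
      = ∫ x in (s - R)..(-(r * Real.cos θ)), 2 * Real.sqrt (R ^ 2 - (x - s) ^ 2) := by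
    apply intervalIntegral.integral_congr
    intro x hx
    rw [Set.uIcc_of_le hsc0] at hx
    rw [hf]; simp only
    rw [min_eq_right]
    nlinarith [mul_nonneg hs.le (show (0:ℝ) ≤ -(r * Real.cos θ) - x by linarith [hx.2])]
  have e2 : ∫ x in (-(r * Real.cos θ))..r, f x
      = ∫ x in (-(r * Real.cos θ))..r, 2 * Real.sqrt (r ^ 2 - x ^ 2) := by
    apply intervalIntegral.integral_congr
    intro x hx
    rw [Set.uIcc_of_le hc0r] at hx
    rw [hf]; simp only
    rw [min_eq_left]
    nlinarith [mul_nonneg hs.le (show (0:ℝ) ≤ x + r * Real.cos θ by linarith [hx.1])]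
  rw [e1, e2]
  have e1' : ∫ x in (s - R)..(-(r * Real.cos θ)), 2 * Real.sqrt (R ^ 2 - (x - s) ^ 2)
      = ∫ u in (-R)..(-(r * Real.cos θ) - s), 2 * Real.sqrt (R ^ 2 - u ^ 2) := by
    have := intervalIntegral.integral_comp_sub_right
      (a := s - R) (b := -(r * Real.cos θ)) (fun u => 2 * Real.sqrt (R ^ 2 - u ^ 2)) s
    rw [this, show s - R - s = -R by ring]
  rw [e1']
  rw [seg_integral hR0 (by linarith) (by linarith) (by linarith)]
  rw [seg_integral (le_of_lt hr) (by nlinarith [mul_nonneg hr.le (show (0:ℝ) ≤ 1 - Real.cos θ by linarith)]) hc0r (le_refl r)]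
  -- evaluate segF values
  have hv1 : segF r r = r ^ 2 * (π / 2) := by
    unfold segF
    rw [show r ^ 2 - r ^ 2 = 0 by ring, Real.sqrt_zero, div_self hr.ne', Real.arcsin_one]
    ring
  have hrsin : Real.sqrt (r ^ 2 - (-(r * Real.cos θ)) ^ 2) = r * Real.sin θ := by
    rw [show r ^ 2 - (-(r * Real.cos θ)) ^ 2 = (r * Real.sin θ) ^ 2 by nlinarith]
    exact Real.sqrt_sq (mul_nonneg hr.le hsin)
  have hv2 : segF r (-(r * Real.cos θ))
      = -(r ^ 2 * Real.cos θ * Real.sin θ) + r ^ 2 * (θ - π / 2) := by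
    unfold segF
    rw [hrsin, show -(r * Real.cos θ) / r = -Real.cos θ by field_simp,
      show -Real.cos θ = Real.sin (θ - π / 2) by rw [Real.sin_sub_pi_div_two],
      Real.arcsin_sin (by linarith) (by linarith)]
    ring
  have hv3 : segF R (-R) = -(R ^ 2 * (π / 2)) := by
    rcases eq_or_lt_of_le hR0 with h0 | h0
    · unfold segF; rw [← h0]; norm_num
    · unfold segF
      rw [show R ^ 2 - (-R) ^ 2 = 0 by ring, Real.sqrt_zero,
        show -R / R = -1 by field_simp, Real.arcsin_neg, Real.arcsin_one]
      ring
  have hRsin : Real.sqrt (R ^ 2 - (-(r * Real.cos θ) - s) ^ 2) = r * Real.sin θ := by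
    rw [show R ^ 2 - (-(r * Real.cos θ) - s) ^ 2 = (r * Real.sin θ) ^ 2 by nlinarith]
    exact Real.sqrt_sq (mul_nonneg hr.le hsin)
  have hv4 : segF R (-(r * Real.cos θ) - s)
      = -((s + r * Real.cos θ) * (r * Real.sin θ))
        - R ^ 2 * Real.arcsin ((s + r * Real.cos θ) / R) := by
    unfold segF
    rw [hRsin, show (-(r * Real.cos θ) - s) / R = -((s + r * Real.cos θ) / R) by ring,
      Real.arcsin_neg]
    ring
  rw [hv1, hv2, hv3, hv4]
  -- final identity
  rcases eq_or_lt_of_le hR0 with h0 | h0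
  · have hzero : s + r * Real.cos θ = 0 := le_antisymm (by linarith [hc2, h0.symm ▸ hc2]) (by linarith [hc3])
    have hsinz : r * Real.sin θ = 0 := by nlinarith
    rw [← h0, hzero, hsinz]
    ring_nf
    nlinarith [hsinz]
  · rw [trig_key r s θ R hr hs hθ1 hθ2 h0 hR2 hc]
    ring

lemma sqrt_le_iff' {X bd : ℝ} (hbd : 0 ≤ bd) : Real.sqrt X ≤ bd ↔ X ≤ bd ^ 2 := by
  constructor
  · intro h
    rcases le_or_gt X 0 with hX | hX
    · exact le_trans hX (sq_nonneg bd)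
    · nlinarith [Real.sq_sqrt hX.le, Real.sqrt_nonneg X]
  · intro h
    calc Real.sqrt X ≤ Real.sqrt (bd ^ 2) := Real.sqrt_le_sqrt h
      _ = bd := Real.sqrt_sq hbd

/-- **Eq. (46).** Asymmetric lens area with `s = dist x₁ x₂ > 0`, `θ ∈ [0, π]`, and
`R = √(r² + s² + 2rs cos θ)`: if `θ ≤ π/2` or `s cos(π − θ) ≤ r`, then the intersection of the
disks of radius `r` at `x₁` and `R` at `x₂` has area
`R²(θ − arcsin(s sin θ / R)) + r²(π − θ) − rs sin θ`. -/
theorem asymmetric_lens_area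
    (x₁ x₂ : EuclideanSpace ℝ (Fin 2)) (r s θ R : ℝ)
    (hs : s = dist x₁ x₂) (hspos : 0 < s) (hr : 0 < r) (hθ : θ ∈ Set.Icc 0 π)
    (hR : R = Real.sqrt (r ^ 2 + s ^ 2 + 2 * r * s * Real.cos θ))
    (hcase : θ ≤ π / 2 ∨ s * Real.cos (π - θ) ≤ r) :
    volume (Metric.closedBall x₁ r ∩ Metric.closedBall x₂ R)
      = ENNReal.ofReal (R ^ 2 * (θ - Real.arcsin (s * Real.sin θ / R))
          + r ^ 2 * (π - θ) - r * s * Real.sin θ) := by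
  obtain ⟨hθ1, hθ2⟩ := hθ
  have hpyth := Real.sin_sq_add_cos_sq θ
  have harg : 0 ≤ r ^ 2 + s ^ 2 + 2 * r * s * Real.cos θ := by
    nlinarith [sq_nonneg (r + s * Real.cos θ), sq_nonneg (s * Real.sin θ)]
  have hR0 : 0 ≤ R := hR ▸ Real.sqrt_nonneg _
  have hR2 : R ^ 2 = r ^ 2 + s ^ 2 + 2 * r * s * Real.cos θ := by
    rw [hR, Real.sq_sqrt harg]
  have hc : 0 ≤ r + s * Real.cos θ := by
    rcases hcase with h | h
    · have : 0 ≤ Real.cos θ := Real.cos_nonneg_of_mem_Icc ⟨by linarith [Real.pi_pos], h⟩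
      positivity
    · rw [Real.cos_pi_sub] at h
      nlinarith
  -- construct adapted orthonormal basis
  have hv : ‖x₂ - x₁‖ = s := by rw [hs, dist_comm, dist_eq_norm]
  set u0 : EuclideanSpace ℝ (Fin 2) := s⁻¹ • (x₂ - x₁) with hu0def
  have hu0 : ‖u0‖ = 1 := by
    rw [hu0def, norm_smul, hv, norm_inv, Real.norm_of_nonneg hspos.le,
      inv_mul_cancel₀ hspos.ne']
  have honb : Orthonormal ℝ (({0} : Set (Fin 2)).restrict (fun _ => u0)) := by
    constructor
    · intro i; exact hu0
    · intro i j hij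
      exact absurd (Subtype.ext (i.2.trans j.2.symm)) hij
  have hcard : Module.finrank ℝ (EuclideanSpace ℝ (Fin 2)) = Fintype.card (Fin 2) :=
    finrank_euclideanSpace
  obtain ⟨b, hb⟩ := honb.exists_orthonormalBasis_extension_of_card_eq hcard
  have hb0 : b 0 = u0 := hb 0 rfl
  -- the key norm computation
  have hnorm : ∀ a c : ℝ, ‖a • b 0 + c • b 1‖ = Real.sqrt (a ^ 2 + c ^ 2) := by
    intro a c
    have hbo := b.orthonormal
    have hn0 : ‖b 0‖ = 1 := hbo.1 0
    have hn1 : ‖b 1‖ = 1 := hbo.1 1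
    have h01 : (inner ℝ (b 0) (b 1) : ℝ) = 0 := hbo.2 (show (0 : Fin 2) ≠ 1 by decide)
    have hsq : ‖a • b 0 + c • b 1‖ ^ 2 = a ^ 2 + c ^ 2 := by
      rw [norm_add_sq_real, norm_smul, norm_smul, real_inner_smul_left,
        real_inner_smul_right, h01, hn0, hn1]
      simp [Real.norm_eq_abs, mul_pow, sq_abs]
    rw [← hsq, Real.sqrt_sq (norm_nonneg _)]
  -- measure-preserving coordinates
  set T : ℝ × ℝ → EuclideanSpace ℝ (Fin 2) :=
    fun p => x₁ + (p.1 • b 0 + p.2 • b 1) with hTdef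
  have hT : MeasurePreserving T volume volume := by
    have h4 : MeasurePreserving (fun y : EuclideanSpace ℝ (Fin 2) => x₁ + y) volume volume :=
      measurePreserving_add_left volume x₁
    have h3 := b.measurePreserving_repr_symm
    have h2 := (EuclideanSpace.volume_preserving_symm_measurableEquiv_toLp (Fin 2)).symm
    have h1 := (volume_preserving_finTwoArrow ℝ).symm
    have hcomp := ((h4.comp h3).comp h2).comp h1
    have hfun : T = (fun y : EuclideanSpace ℝ (Fin 2) => x₁ + y) ∘ b.repr.symm ∘
        (MeasurableEquiv.toLp 2 (Fin 2 → ℝ)) ∘ (MeasurableEquiv.finTwoArrow).symm := by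
      funext p
      simp only [hTdef, Function.comp_apply]
      congr 1
      have key : b.repr.symm ((MeasurableEquiv.toLp 2 (Fin 2 → ℝ))
          ((MeasurableEquiv.finTwoArrow).symm p)) =
          ∑ i : Fin 2, ((MeasurableEquiv.toLp 2 (Fin 2 → ℝ))
          ((MeasurableEquiv.finTwoArrow).symm p)) i • b i := (b.sum_repr_symm _).symm
      rw [key, Fin.sum_univ_two]
      have hcoord : ∀ i : Fin 2, ((MeasurableEquiv.toLp 2 (Fin 2 → ℝ))
          ((MeasurableEquiv.finTwoArrow).symm p)) i = ![p.1, p.2] i := by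
        intro i
        fin_cases i <;>
          simp [MeasurableEquiv.coe_toLp, MeasurableEquiv.finTwoArrow,
            MeasurableEquiv.piFinTwo]
      rw [hcoord 0, hcoord 1]
      simp
    rw [hfun]
    exact hcomp
  -- preimage identification
  have hx2 : x₂ = x₁ + s • b 0 := by
    rw [hb0, hu0def, smul_smul, mul_inv_cancel₀ hspos.ne', one_smul]
    abel
  have hpre : T ⁻¹' (Metric.closedBall x₁ r ∩ Metric.closedBall x₂ R)
      = {p : ℝ × ℝ | p.1 ^ 2 + p.2 ^ 2 ≤ r ^ 2 ∧ (p.1 - s) ^ 2 + p.2 ^ 2 ≤ R ^ 2} := by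
    ext p
    simp only [Set.mem_preimage, Set.mem_inter_iff, Metric.mem_closedBall, Set.mem_setOf_eq]
    have hd1 : dist (T p) x₁ = Real.sqrt (p.1 ^ 2 + p.2 ^ 2) := by
      rw [dist_eq_norm, hTdef]
      simp only
      rw [add_sub_cancel_left]
      exact hnorm p.1 p.2
    have hd2 : dist (T p) x₂ = Real.sqrt ((p.1 - s) ^ 2 + p.2 ^ 2) := by
      rw [dist_eq_norm, hTdef]
      simp only
      rw [hx2, show x₁ + (p.1 • b 0 + p.2 • b 1) - (x₁ + s • b 0)
        = (p.1 - s) • b 0 + p.2 • b 1 by module]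
      exact hnorm _ _
    rw [hd1, hd2, sqrt_le_iff' hr.le, sqrt_le_iff' hR0]
  -- conclude
  have := hT.measure_preimage
    ((measurableSet_closedBall.inter measurableSet_closedBall).nullMeasurableSet
      : NullMeasurableSet (Metric.closedBall x₁ r ∩ Metric.closedBall x₂ R) volume)
  rw [← this, hpre, planar_slice r s R,
    planar_eval r s θ R hr hspos hθ1 hθ2 hR0 hR2 hc]
end

section
/- Let t > 0 and fix r, ρ > 0. Let v be a nonnegative random variable whose law has CDF F_v and Lebesgue density f_v, and let θ be uniformly distributed on [0, 2π) and independent of v. Define the displaced distance D = √(r² + v²t² + 2·r·v·t·cos θ). Then P(D ≤ ρ) = F_v((ρ − r)/t) + (1/π)·∫_{|ρ−r|/t}^{(ρ+r)/t} f_v(x)·arccos((r² + x²t² − ρ²)/(2·r·x·t)) dx, where F_v((ρ − r)/t) is interpreted as 0 when ρ < r. -/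
open MeasureTheory ProbabilityTheory Real Set


lemma cos_le_iff_arccos_le {y c : ℝ} (hy0 : 0 ≤ y) (hyπ : y ≤ π) (hc : -1 ≤ c) (hc1 : c ≤ 1) :
    Real.cos y ≤ c ↔ Real.arccos c ≤ y := by
  have hca : Real.cos (Real.arccos c) = c := Real.cos_arccos hc hc1
  constructor
  · intro h
    by_contra hlt
    push_neg at hlt
    have := Real.strictAntiOn_cos ⟨hy0, hyπ⟩ ⟨Real.arccos_nonneg c, Real.arccos_le_pi c⟩ hlt
    rw [hca] at this
    exact absurd h (not_le.2 this)
  · intro h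
    calc Real.cos y ≤ Real.cos (Real.arccos c) :=
          Real.cos_le_cos_of_nonneg_of_le_pi (Real.arccos_nonneg c) hyπ h
      _ = c := hca

lemma cos_slice_vol (c : ℝ) :
    volume {y | y ∈ Set.Ico 0 (2*π) ∧ Real.cos y ≤ c}
      = ENNReal.ofReal (2*π - 2*Real.arccos c) := by
  have hπ : 0 < π := pi_pos
  rcases lt_or_ge c (-1) with hc | hc
  · have hs : {y | y ∈ Set.Ico 0 (2*π) ∧ Real.cos y ≤ c} = (∅ : Set ℝ) := by
      ext y; simp only [mem_setOf_eq, mem_empty_iff_false, iff_false, not_and]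
      exact fun _ h => absurd (le_trans (neg_one_le_cos y) h) (not_le.2 hc)
    rw [hs, arccos_of_le_neg_one hc.le, measure_empty]
    rw [eq_comm, ENNReal.ofReal_eq_zero]
    linarith
  rcases le_or_gt 1 c with hc1 | hc1
  · have hs : {y | y ∈ Set.Ico 0 (2*π) ∧ Real.cos y ≤ c} = Set.Ico 0 (2*π) := by
      ext y; simp only [mem_setOf_eq, and_iff_left_iff_imp]
      exact fun _ => (cos_le_one y).trans hc1
    rw [hs, arccos_of_one_le hc1, Real.volume_Ico]
    ring_nf
  · have ha0 : 0 < Real.arccos c := arccos_pos.2 hc1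
    have haπ : Real.arccos c ≤ π := arccos_le_pi c
    have hset : {y | y ∈ Set.Ico 0 (2*π) ∧ Real.cos y ≤ c}
        = Set.Icc (Real.arccos c) (2*π - Real.arccos c) := by
      ext y
      simp only [mem_setOf_eq, mem_Ico, mem_Icc]
      constructor
      · rintro ⟨⟨hy0, hy2⟩, hcy⟩
        rcases le_or_gt y π with hyπ | hyπ
        · have h1 := (cos_le_iff_arccos_le hy0 hyπ hc hc1.le).1 hcy
          exact ⟨h1, by linarith⟩
        · have hy' : Real.cos (2*π - y) ≤ c := by rwa [Real.cos_two_pi_sub]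
          have h1 := (cos_le_iff_arccos_le (by linarith) (by linarith) hc hc1.le).1 hy'
          exact ⟨by linarith, by linarith⟩
      · rintro ⟨h1, h2⟩
        have hy0 : 0 ≤ y := le_trans ha0.le h1
        have hy2 : y < 2*π := by linarith
        refine ⟨⟨hy0, hy2⟩, ?_⟩
        rcases le_or_gt y π with hyπ | hyπ
        · exact (cos_le_iff_arccos_le hy0 hyπ hc hc1.le).2 h1
        · rw [← Real.cos_two_pi_sub]
          exact (cos_le_iff_arccos_le (by linarith) (by linarith) hc hc1.le).2 (by linarith)
    rw [hset, Real.volume_Icc]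
    ring_nf

lemma sec_prob {t r ρ : ℝ} (ht : 0 < t) (hr : 0 < r) (hρ : 0 < ρ) {x : ℝ} (hx : 0 < x) :
    ((ENNReal.ofReal (2 * π))⁻¹ • volume.restrict (Set.Ico 0 (2 * π)))
      {y : ℝ | Real.sqrt (r ^ 2 + x ^ 2 * t ^ 2 + 2 * r * x * t * Real.cos y) ≤ ρ}
    = ENNReal.ofReal (π⁻¹ * Real.arccos ((r ^ 2 + x ^ 2 * t ^ 2 - ρ ^ 2) / (2 * r * x * t))) := by
  have hπ : 0 < π := pi_pos
  have hden : 0 < 2 * r * x * t := by positivity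
  set c : ℝ := (ρ ^ 2 - r ^ 2 - x ^ 2 * t ^ 2) / (2 * r * x * t) with hc
  set h : ℝ := (r ^ 2 + x ^ 2 * t ^ 2 - ρ ^ 2) / (2 * r * x * t) with hh
  have hch : c = -h := by rw [hc, hh]; ring
  have hmemb : ∀ y : ℝ,
      (Real.sqrt (r ^ 2 + x ^ 2 * t ^ 2 + 2 * r * x * t * Real.cos y) ≤ ρ ↔ Real.cos y ≤ c) := by
    intro y
    rw [Real.sqrt_le_iff, hc, le_div_iff₀ hden]
    constructor
    · intro hyp; nlinarith [hyp.2]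
    · intro hyp; constructor
      · exact hρ.le
      · nlinarith
  have hsmeas : MeasurableSet {y : ℝ |
      Real.sqrt (r ^ 2 + x ^ 2 * t ^ 2 + 2 * r * x * t * Real.cos y) ≤ ρ} := by
    apply measurableSet_le _ measurable_const
    fun_prop
  rw [Measure.smul_apply, Measure.restrict_apply hsmeas]
  have hseteq : {y : ℝ | Real.sqrt (r ^ 2 + x ^ 2 * t ^ 2 + 2 * r * x * t * Real.cos y) ≤ ρ}
      ∩ Set.Ico 0 (2*π) = {y | y ∈ Set.Ico 0 (2*π) ∧ Real.cos y ≤ c} := by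
    ext y
    simp only [mem_inter_iff, mem_setOf_eq, hmemb y]
    tauto
  rw [hseteq, cos_slice_vol]
  have harc : Real.arccos c = π - Real.arccos h := by rw [hch, Real.arccos_neg]
  have h2 : 2*π - 2*Real.arccos c = 2 * Real.arccos h := by rw [harc]; ring
  rw [h2]
  have harcnn : 0 ≤ Real.arccos h := Real.arccos_nonneg h
  have h3 : π⁻¹ * Real.arccos h = (2 * Real.arccos h) / (2*π) := by
    field_simp
  rw [smul_eq_mul, h3, ENNReal.ofReal_div_of_pos (by positivity : (0:ℝ) < 2*π),
    div_eq_mul_inv, mul_comm]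

/-- **Lemma 1 kernel.** For a point at initial distance `r` that moves for time `t`
at a random nonnegative speed `v` (with CDF `Fv` and density `fv`) in an independent uniformly
random direction `θ`, the probability that the displaced distance
`D = √(r² + v²t² + 2rvt cos θ)` is at most `ρ` equals
`Fv((ρ − r)/t) + (1/π)·∫_{|ρ−r|/t}^{(ρ+r)/t} fv(x)·arccos((r² + x²t² − ρ²)/(2rxt)) dx`. -/
theorem displaced_distance_cdf
    {Ω : Type*} [MeasurableSpace Ω] (μ : Measure Ω) [IsProbabilityMeasure μ]
    (t r ρ : ℝ) (ht : 0 < t) (hr : 0 < r) (hρ : 0 < ρ)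
    (v θ : Ω → ℝ) (hvmeas : Measurable v) (hθmeas : Measurable θ)
    (hvnonneg : ∀ᵐ ω ∂μ, 0 ≤ v ω)
    (fv : ℝ → ℝ) (hfmeas : Measurable fv) (hfnonneg : ∀ x, 0 ≤ fv x)
    (hvlaw : Measure.map v μ = volume.withDensity fun x => ENNReal.ofReal (fv x))
    (Fv : ℝ → ℝ) (hFv : ∀ x, Fv x = (μ {ω | v ω ≤ x}).toReal)
    (hθunif : Measure.map θ μ
      = (ENNReal.ofReal (2 * π))⁻¹ • volume.restrict (Set.Ico 0 (2 * π)))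
    (hindep : IndepFun v θ μ) :
    (μ {ω | Real.sqrt (r ^ 2 + (v ω) ^ 2 * t ^ 2
        + 2 * r * v ω * t * Real.cos (θ ω)) ≤ ρ}).toReal
      = Fv ((ρ - r) / t)
        + π⁻¹ * ∫ x in (|ρ - r| / t)..((ρ + r) / t),
            fv x * Real.arccos ((r ^ 2 + x ^ 2 * t ^ 2 - ρ ^ 2) / (2 * r * x * t)) := by
  have hπ : (0:ℝ) < π := pi_pos
  set A : ℝ := |ρ - r| / t with hA
  set B : ℝ := (ρ + r) / t with hB
  set g : ℝ → ℝ := fun x => π⁻¹ * Real.arccos ((r ^ 2 + x ^ 2 * t ^ 2 - ρ ^ 2) / (2 * r * x * t))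
    with hg
  set S : Set (ℝ × ℝ) :=
    {p : ℝ × ℝ | Real.sqrt (r ^ 2 + p.1 ^ 2 * t ^ 2 + 2 * r * p.1 * t * Real.cos p.2) ≤ ρ}
    with hS
  have hSmeas : MeasurableSet S := by
    apply measurableSet_le _ measurable_const
    fun_prop
  have hgmeas : Measurable g := by
    apply Measurable.const_mul
    exact Real.continuous_arccos.measurable.comp (by fun_prop)
  have hgnn : ∀ x, 0 ≤ g x := fun x => mul_nonneg (inv_nonneg.2 hπ.le) (Real.arccos_nonneg _)
  have hofmeas : Measurable fun x => ENNReal.ofReal (fv x) := hfmeas.ennreal_ofReal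
  -- Step 1: rewrite the probability as a product-measure integral
  have hμE : μ {ω | Real.sqrt (r ^ 2 + (v ω) ^ 2 * t ^ 2
        + 2 * r * v ω * t * Real.cos (θ ω)) ≤ ρ}
      = ∫⁻ x, (Measure.map θ μ) (Prod.mk x ⁻¹' S) ∂(Measure.map v μ) := by
    have hpair : Measure.map (fun ω => (v ω, θ ω)) μ
        = (Measure.map v μ).prod (Measure.map θ μ) :=
      (indepFun_iff_map_prod_eq_prod_map_map hvmeas.aemeasurable hθmeas.aemeasurable).mp hindep
    have : IsProbabilityMeasure (Measure.map θ μ) :=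
      Measure.isProbabilityMeasure_map hθmeas.aemeasurable
    have hpre : {ω | Real.sqrt (r ^ 2 + (v ω) ^ 2 * t ^ 2
        + 2 * r * v ω * t * Real.cos (θ ω)) ≤ ρ} = (fun ω => (v ω, θ ω)) ⁻¹' S := rfl
    rw [hpre, ← Measure.map_apply (hvmeas.prodMk hθmeas) hSmeas, hpair,
      Measure.prod_apply hSmeas]
  -- Step 2: a.e. positivity under the law of v
  have hv_ae_pos : ∀ᵐ x ∂(Measure.map v μ), 0 < x := by
    have h1 : ∀ᵐ x ∂(Measure.map v μ), 0 ≤ x :=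
      (ae_map_iff hvmeas.aemeasurable (measurableSet_le measurable_const measurable_id)).2
        hvnonneg
    have h2 : (Measure.map v μ) {0} = 0 := by
      rw [hvlaw, withDensity_apply _ (measurableSet_singleton 0)]
      exact setLIntegral_measure_zero _ _ Real.volume_singleton
    have h3 : ∀ᵐ x ∂(Measure.map v μ), x ≠ 0 := by
      rw [ae_iff]
      convert h2 using 2
      ext x; simp
    filter_upwards [h1, h3] with x h1 h3
    exact lt_of_le_of_ne h1 (Ne.symm h3)
  -- Step 3: evaluate the inner measure a.e.
  have hsec : ∀ᵐ x ∂(Measure.map v μ),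
      (Measure.map θ μ) (Prod.mk x ⁻¹' S) = ENNReal.ofReal (g x) := by
    filter_upwards [hv_ae_pos] with x hx
    rw [hθunif]
    exact sec_prob ht hr hρ hx
  -- Step 4: everything as a Lebesgue integral against the density
  have hμE2 : μ {ω | Real.sqrt (r ^ 2 + (v ω) ^ 2 * t ^ 2
        + 2 * r * v ω * t * Real.cos (θ ω)) ≤ ρ}
      = ∫⁻ x, ENNReal.ofReal (fv x * g x) ∂volume := by
    rw [hμE, lintegral_congr_ae hsec, hvlaw,
      lintegral_withDensity_eq_lintegral_mul volume hofmeas hgmeas.ennreal_ofReal]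
    exact lintegral_congr fun x => (ENNReal.ofReal_mul (hfnonneg x)).symm
  -- elementary facts
  have hABle : A ≤ B := by
    rw [hA, hB]
    exact (div_le_div_iff_of_pos_right ht).2 (abs_le.2 ⟨by linarith, by linarith⟩)
  have hB0 : 0 < B := by rw [hB]; positivity
  have hne0 : ∀ᵐ x : ℝ ∂volume, x ≠ 0 := by
    rw [ae_iff]
    have : {x : ℝ | ¬ x ≠ 0} = {0} := by ext x; simp
    rw [this]
    exact Real.volume_singleton
  have hfv_neg : ∀ᵐ x : ℝ ∂volume, x < 0 → fv x = 0 := by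
    have hν0 : (Measure.map v μ) (Iio 0) = 0 := by
      rw [Measure.map_apply hvmeas measurableSet_Iio]
      have hset : v ⁻¹' (Iio 0) = {ω | ¬ 0 ≤ v ω} := by ext ω; simp [not_le]
      rw [hset]
      exact ae_iff.1 hvnonneg
    rw [hvlaw, withDensity_apply _ measurableSet_Iio] at hν0
    have h5 := (setLIntegral_eq_zero_iff measurableSet_Iio hofmeas).1 hν0
    filter_upwards [h5] with x hx hneg
    have := hx hneg
    simp only [Pi.zero_apply, ENNReal.ofReal_eq_zero] at this
    exact le_antisymm this (hfnonneg x)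
  -- arccos saturation values
  have hg_one : ∀ x : ℝ, 0 < x → x * t ≤ ρ - r → g x = 1 := by
    intro x hx hle
    have hden : (0:ℝ) < 2 * r * x * t := by positivity
    have hle1 : (r ^ 2 + x ^ 2 * t ^ 2 - ρ ^ 2) / (2 * r * x * t) ≤ -1 := by
      rw [div_le_iff₀ hden]
      nlinarith [mul_self_le_mul_self (by positivity : (0:ℝ) ≤ r + x * t)
        (by linarith : r + x * t ≤ ρ)]
    rw [hg]
    simp only
    rw [arccos_of_le_neg_one hle1]
    exact inv_mul_cancel₀ hπ.ne'
  have hg_zero : ∀ x : ℝ, 0 < x → ρ ^ 2 ≤ (x * t - r) ^ 2 → g x = 0 := by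
    intro x hx hsq
    have hden : (0:ℝ) < 2 * r * x * t := by positivity
    have hle1 : 1 ≤ (r ^ 2 + x ^ 2 * t ^ 2 - ρ ^ 2) / (2 * r * x * t) := by
      rw [le_div_iff₀ hden]; nlinarith
    rw [hg]
    simp only
    rw [arccos_of_one_le hle1, mul_zero]
  -- vanishing beyond B
  have hIoiB0 : ∫⁻ x in Ioi B, ENNReal.ofReal (fv x * g x) = 0 := by
    have hz : ∀ᵐ x : ℝ ∂volume, x ∈ Ioi B → ENNReal.ofReal (fv x * g x) = 0 := by
      refine ae_of_all _ fun x hx => ?_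
      have hx0 : (0:ℝ) < x := hB0.trans hx
      have hxt : ρ + r < x * t := by
        have := (div_lt_iff₀ ht).1 hx
        linarith
      rw [hg_zero x hx0 (by nlinarith), mul_zero, ENNReal.ofReal_zero]
    rw [setLIntegral_congr_fun_ae measurableSet_Ioi hz, lintegral_zero]
  -- the splitting
  have hsplit : ∫⁻ x, ENNReal.ofReal (fv x * g x)
      = (∫⁻ x in Iic A, ENNReal.ofReal (fv x * g x))
        + ∫⁻ x in Ioc A B, ENNReal.ofReal (fv x * g x) := by
    rw [← lintegral_add_compl (fun x => ENNReal.ofReal (fv x * g x)) measurableSet_Iic]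
    congr 1
    rw [compl_Iic, ← Ioc_union_Ioi_eq_Ioi hABle,
      lintegral_union measurableSet_Ioi Ioc_disjoint_Ioi_same, hIoiB0, add_zero]
  -- the first piece equals the probability of {v ≤ (ρ - r)/t}
  have hfirst : ∫⁻ x in Iic A, ENNReal.ofReal (fv x * g x) = μ {ω | v ω ≤ (ρ - r) / t} := by
    rcases le_or_gt r ρ with hrρ | hrρ
    · have habs : A = (ρ - r) / t := by rw [hA, abs_of_nonneg (by linarith : (0:ℝ) ≤ ρ - r)]
      have hae : ∀ᵐ x : ℝ ∂volume, x ∈ Iic A →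
          ENNReal.ofReal (fv x * g x) = ENNReal.ofReal (fv x) := by
        filter_upwards [hfv_neg, hne0] with x h1 h2 hxA
        rcases h2.lt_or_gt with hneg | hpos
        · rw [h1 hneg, zero_mul]
        · have hxt : x * t ≤ ρ - r := by
            have hx' : x ≤ (ρ - r) / t := habs ▸ hxA
            have := (le_div_iff₀ ht).1 hx'
            linarith
          rw [hg_one x hpos hxt, mul_one]
      rw [setLIntegral_congr_fun_ae measurableSet_Iic hae,
        ← withDensity_apply _ measurableSet_Iic, ← hvlaw,
        Measure.map_apply hvmeas measurableSet_Iic]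
      congr 1
      ext ω; simp [habs]
    · -- ρ < r : both sides vanish
      have hA' : A = (r - ρ) / t := by
        rw [hA, abs_of_neg (by linarith : ρ - r < 0)]; ring_nf
      have hz : ∀ᵐ x : ℝ ∂volume, x ∈ Iic A → ENNReal.ofReal (fv x * g x) = 0 := by
        filter_upwards [hfv_neg, hne0] with x h1 h2 hxA
        rcases h2.lt_or_gt with hneg | hpos
        · rw [h1 hneg, zero_mul, ENNReal.ofReal_zero]
        · have hxt : x * t ≤ r - ρ := by
            have hx' : x ≤ (r - ρ) / t := hA' ▸ hxA
            have := (le_div_iff₀ ht).1 hx'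
            linarith
          rw [hg_zero x hpos (by nlinarith), mul_zero, ENNReal.ofReal_zero]
      rw [setLIntegral_congr_fun_ae measurableSet_Iic hz, lintegral_zero]
      symm
      refine measure_mono_null (fun ω hω => ?_) (ae_iff.1 hvnonneg)
      have hneg : (ρ - r) / t < 0 := div_neg_of_neg_of_pos (by linarith) ht
      exact not_le.2 (lt_of_le_of_lt hω hneg)
  -- assembling
  have key : μ {ω | Real.sqrt (r ^ 2 + (v ω) ^ 2 * t ^ 2
        + 2 * r * v ω * t * Real.cos (θ ω)) ≤ ρ}
      = μ {ω | v ω ≤ (ρ - r) / t} + ∫⁻ x in Ioc A B, ENNReal.ofReal (fv x * g x) := by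
    rw [hμE2, hsplit, hfirst]
  have hP2ne : (∫⁻ x in Ioc A B, ENNReal.ofReal (fv x * g x)) ≠ ⊤ := by
    refine ne_top_of_le_ne_top (measure_ne_top μ {ω | Real.sqrt (r ^ 2 + (v ω) ^ 2 * t ^ 2
        + 2 * r * v ω * t * Real.cos (θ ω)) ≤ ρ}) ?_
    rw [key]
    exact le_add_self
  rw [key, ENNReal.toReal_add (measure_ne_top _ _) hP2ne, ← hFv]
  congr 1
  -- the interval integral piece
  rw [intervalIntegral.integral_of_le hABle]
  have h6 : π⁻¹ * ∫ x in Ioc A B,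
        fv x * Real.arccos ((r ^ 2 + x ^ 2 * t ^ 2 - ρ ^ 2) / (2 * r * x * t)) ∂volume
      = ∫ x in Ioc A B, fv x * g x ∂volume := by
    rw [← integral_const_mul]
    refine integral_congr_ae (ae_of_all _ fun x => ?_)
    rw [hg]; simp only; ring
  rw [h6, integral_eq_lintegral_of_nonneg_ae
    (ae_of_all _ fun x => mul_nonneg (hfnonneg x) (hgnn x))
    ((hfmeas.mul hgmeas).aestronglyMeasurable)]
end
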